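/- Every closed polygon in ℝ^n of length L is contained, after a translation, in a closed ball of radius L/4: there exists x ∈ ℝ^n such that the image of the polygon is contained in closedBall(x, L/4). Equivalently, every closed polygon whose image has no translate contained in the open ball of radius r > 0 has length ≥ 4r. -/

import Mathlib

open scoped RealInnerProductSpace Pointwise
open Metric

noncomputable section

/-- Euclidean space ℝ^n. -/
abbrev Euc (n : ℕ) := EuclideanSpace ℝ (Fin n)

/-- The image of a closed polygon with vertices `q 0, …, q (m-1)` (indices mod `m`):
the union of the segments `[q i, q (i+1)]`. -/
def polyImage {n m : ℕ} [NeZero m] (q : Fin m → Euc n) : Set (Euc n) :=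
  ⋃ i : Fin m, segment ℝ (q i) (q (i + 1))

/-- The length of a closed polygon: `∑ i, ‖q (i+1) - q i‖`. -/
noncomputable def polyLength {n m : ℕ} [NeZero m] (q : Fin m → Euc n) : ℝ :=
  ∑ i : Fin m, ‖q (i + 1) - q i‖

/-- A convex body: a compact convex set with nonempty interior. -/
def IsConvexBody {n : ℕ} (K : Set (Euc n)) : Prop :=
  IsCompact K ∧ Convex ℝ K ∧ (interior K).Nonempty

/-- A closed polygon belongs to `𝒫⁺(K)` if no translate of its image is contained
in the interior of `K`. -/
def InPPlus {n m : ℕ} [NeZero m] (K : Set (Euc n)) (q : Fin m → Euc n) : Prop :=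
  ∀ x : Euc n, ¬ ((fun p => p + x) '' polyImage q ⊆ interior K)

/-- Unit direction of the `i`-th edge of a closed polygon. -/
noncomputable def dir {n m : ℕ} [NeZero m] (q : Fin m → Euc n) (i : Fin m) : Euc n :=
  ‖q (i + 1) - q i‖⁻¹ • (q (i + 1) - q i)

/-- Outer normal `ν i = u (i-1) - u i` at the `i`-th vertex. -/
noncomputable def normalVec {n m : ℕ} [NeZero m] (q : Fin m → Euc n) (i : Fin m) : Euc n :=
  dir q (i - 1) - dir q i

/-- A periodic billiard trajectory on a convex body `K`. -/
def IsBilliard {n m : ℕ} [NeZero m] (K : Set (Euc n)) (q : Fin m → Euc n) : Prop :=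
  2 ≤ m ∧ (∀ i, q (i + 1) ≠ q i) ∧ (∀ i, q i ∈ K) ∧
    ∀ i, normalVec q i ≠ 0 ∧ ∀ x ∈ K, ⟪x - q i, normalVec q i⟫ ≤ 0

open Fin.NatCast in
set_option maxHeartbeats 1000000 in
lemma exists_center {n m : ℕ} [NeZero m] (q : Fin m → Euc n) :
    ∃ x : Euc n, polyImage q ⊆ Metric.closedBall x (polyLength q / 4) := by
  classical
  set Q : ℕ → Euc n := fun k => q k with hQ
  set ℓ : ℕ → ℝ := fun k => ‖Q (k + 1) - Q k‖ with hℓ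
  set s : ℕ → ℝ := fun k => ∑ i ∈ Finset.range k, ℓ i with hs
  set L : ℝ := s m with hL
  have hm : 0 < m := Nat.pos_of_ne_zero (NeZero.ne m)
  have hℓnn : ∀ k, 0 ≤ ℓ k := fun k => norm_nonneg _
  have hℓdef : ∀ k, ‖Q (k + 1) - Q k‖ = ℓ k := fun k => rfl
  have hsucc : ∀ k, s (k + 1) = s k + ℓ k := fun k => Finset.sum_range_succ ℓ k
  have hs0 : s 0 = 0 := Finset.sum_range_zero ℓ
  have hLnn : 0 ≤ L := Finset.sum_nonneg fun i _ => hℓnn i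
  have hQm : Q m = Q 0 := by simp [hQ, Fin.natCast_self]
  -- polyLength q = L
  have hlen : polyLength q = L := by
    have h0 : L = ∑ i ∈ Finset.range m, ℓ i := rfl
    rw [h0, polyLength, ← Fin.sum_univ_eq_sum_range]
    refine Finset.sum_congr rfl fun i _ => ?_
    have h1 : ((i : ℕ) : Fin m) = i := Fin.cast_val_eq_self i
    have h2 : (((i : ℕ) + 1 : ℕ) : Fin m) = i + 1 := by push_cast [h1]; ring
    simp only [← hℓdef, hQ, h2, h1]
  -- telescoping bound
  have hA : ∀ k l : ℕ, k ≤ l → ‖Q l - Q k‖ ≤ s l - s k := by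
    intro k l hkl
    have h1 := dist_le_range_sum_dist (fun i => Q (k + i)) (l - k)
    simp only [Nat.add_sub_cancel' hkl, add_zero] at h1
    have h2 : ∀ i : ℕ, dist (Q (k + i)) (Q (k + (i + 1))) = ℓ (k + i) := by
      intro i
      rw [dist_eq_norm, norm_sub_rev, ← add_assoc]
    calc ‖Q l - Q k‖ = dist (Q k) (Q l) := by rw [dist_eq_norm, norm_sub_rev]
      _ ≤ ∑ i ∈ Finset.range (l - k), dist (Q (k + i)) (Q (k + (i + 1))) := h1
      _ = ∑ i ∈ Finset.range (l - k), ℓ (k + i) :=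
          Finset.sum_congr rfl fun i _ => h2 i
      _ = ∑ i ∈ Finset.Ico k l, ℓ i := (Finset.sum_Ico_eq_sum_range ℓ k l).symm
      _ = s l - s k := Finset.sum_Ico_eq_sub ℓ hkl
  -- choose j
  have hmm : m - 1 + 1 = m := by omega
  have hex : ∃ j, L / 2 ≤ s (j + 1) := ⟨m - 1, by rw [hmm]; linarith⟩
  set j : ℕ := Nat.find hex with hj
  have hj1 : L / 2 ≤ s (j + 1) := Nat.find_spec hex
  have hj2 : s j ≤ L / 2 := by
    rcases Nat.eq_zero_or_pos j with h0 | h0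
    · rw [h0, hs0]; linarith
    · have h1 := Nat.find_min hex (m := j - 1) (by omega)
      have hj' : j - 1 + 1 = j := by omega
      rw [hj'] at h1
      linarith [not_le.mp h1]
  have hjm : j < m := by
    have : j ≤ m - 1 := Nat.find_le (by rw [hmm]; linarith)
    omega
  -- define b
  set θ : ℝ := (L / 2 - s j) / ℓ j with hθ
  have hθℓ : θ * ℓ j = L / 2 - s j := by
    by_cases h : ℓ j = 0
    · have h1 : s (j + 1) = s j := by rw [hsucc j, h, add_zero]
      have h2 : L / 2 = s j := le_antisymm (h1 ▸ hj1 : L / 2 ≤ s j) hj2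
      rw [hθ, h, div_zero, zero_mul, h2, sub_self]
    · rw [hθ, div_mul_cancel₀ _ h]
  have hθ0 : 0 ≤ θ := div_nonneg (by linarith) (hℓnn j)
  have hθ1 : θ ≤ 1 := by
    by_cases h : ℓ j = 0
    · rw [hθ, h, div_zero]; norm_num
    · have hp : 0 < ℓ j := lt_of_le_of_ne (hℓnn j) (Ne.symm h)
      rw [hθ, div_le_one hp]
      have := hsucc j
      linarith
  set b : Euc n := Q j + θ • (Q (j + 1) - Q j) with hb
  have hbQ : ‖b - Q j‖ = L / 2 - s j := by
    have h1 : b - Q j = θ • (Q (j + 1) - Q j) := by rw [hb]; abel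
    rw [h1, norm_smul, Real.norm_eq_abs, abs_of_nonneg hθ0, hℓdef, hθℓ]
  have hQb : ‖Q (j + 1) - b‖ = s (j + 1) - L / 2 := by
    have h1 : Q (j + 1) - b = (1 - θ) • (Q (j + 1) - Q j) := by
      rw [hb, sub_smul, one_smul]; abel
    rw [h1, norm_smul, Real.norm_eq_abs, abs_of_nonneg (by linarith), hℓdef]
    have := hsucc j
    nlinarith [hθℓ]
  -- main estimate
  have key : ∀ p ∈ polyImage q, ‖p - Q 0‖ + ‖p - b‖ ≤ L / 2 := by
    intro p hp
    rw [polyImage, Set.mem_iUnion] at hp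
    obtain ⟨i, hpi⟩ := hp
    rw [segment_eq_image'] at hpi
    obtain ⟨t, ht, rfl⟩ := hpi
    obtain ⟨ht0, ht1⟩ := ht
    obtain ⟨i', hi'm, hqi, hqi1⟩ :
        ∃ i' : ℕ, i' < m ∧ q i = Q i' ∧ q (i + 1) = Q (i' + 1) := by
      refine ⟨(i : ℕ), i.isLt, ?_, ?_⟩
      · simp [hQ, Fin.cast_val_eq_self]
      · have h1 : (((i : ℕ) : ℕ) : Fin m) = i := Fin.cast_val_eq_self i
        have h2 : (((i : ℕ) + 1 : ℕ) : Fin m) = i + 1 := by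
          rw [Nat.cast_add, Nat.cast_one, h1]
        simp only [hQ, h2]
    rw [hqi, hqi1]
    obtain ⟨d, hd⟩ : ∃ d : Euc n, d = Q (i' + 1) - Q i' := ⟨_, rfl⟩
    rw [← hd]
    have hdn : ‖d‖ = ℓ i' := by rw [hd]
    have hup : ‖Q i' + t • d - Q i'‖ = t * ℓ i' := by
      rw [show Q i' + t • d - Q i' = t • d by abel, norm_smul, Real.norm_eq_abs,
        abs_of_nonneg ht0, hdn]
    have hvp : ‖Q (i' + 1) - (Q i' + t • d)‖ = (1 - t) * ℓ i' := by
      have h1 : Q (i' + 1) - (Q i' + t • d) = (1 - t) • d := by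
        rw [sub_smul, one_smul, hd]; abel
      rw [h1, norm_smul, Real.norm_eq_abs, abs_of_nonneg (by linarith), hdn]
    have hsi := hsucc i'
    rcases lt_trichotomy i' j with hij | hij | hij
    · -- i' < j
      have n1 := norm_sub_le_norm_sub_add_norm_sub (Q i' + t • d) (Q i') (Q 0)
      have n2 := norm_sub_le_norm_sub_add_norm_sub (Q i' + t • d) (Q (i' + 1)) b
      have n3 := norm_sub_le_norm_sub_add_norm_sub (Q (i' + 1)) (Q j) b
      have n4 : ‖Q i' - Q 0‖ ≤ s i' - s 0 := hA 0 i' (Nat.zero_le _)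
      have n5 : ‖Q (i' + 1) - Q j‖ ≤ s j - s (i' + 1) := by
        rw [norm_sub_rev]; exact hA (i' + 1) j (by omega)
      have n6 : ‖Q j - b‖ = L / 2 - s j := by rw [norm_sub_rev, hbQ]
      have n7 : ‖Q i' + t • d - Q (i' + 1)‖ = (1 - t) * ℓ i' := by
        rw [norm_sub_rev, hvp]
      linarith
    · -- i' = j
      subst hij
      have hpb : ‖Q j + t • d - b‖ = |t - θ| * ℓ j := by
        have h1 : Q j + t • d - b = (t - θ) • d := by
          rw [hb, sub_smul, hd]; abel
        rw [h1, norm_smul, Real.norm_eq_abs, hdn]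
      rcases le_total t θ with htθ | htθ
      · have n1 := norm_sub_le_norm_sub_add_norm_sub (Q j + t • d) (Q j) (Q 0)
        have n4 : ‖Q j - Q 0‖ ≤ s j - s 0 := hA 0 j (Nat.zero_le _)
        have e2 : ‖Q j + t • d - b‖ = (θ - t) * ℓ j := by
          rw [hpb, abs_of_nonpos (by linarith), neg_sub]
        have hmul : t * ℓ j ≤ θ * ℓ j := mul_le_mul_of_nonneg_right htθ (hℓnn j)
        rw [e2]
        linarith [hθℓ]
      · have n1 := norm_sub_le_norm_sub_add_norm_sub (Q j + t • d) (Q (j + 1)) (Q m)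
        have n7 : ‖Q j + t • d - Q (j + 1)‖ = (1 - t) * ℓ j := by
          rw [norm_sub_rev, hvp]
        have n8 : ‖Q (j + 1) - Q m‖ ≤ s m - s (j + 1) := by
          rw [norm_sub_rev]; exact hA (j + 1) m (by omega)
        have e2 : ‖Q j + t • d - b‖ = (t - θ) * ℓ j := by
          rw [hpb, abs_of_nonneg (by linarith)]
        have hmul : θ * ℓ j ≤ t * ℓ j := mul_le_mul_of_nonneg_right htθ (hℓnn j)
        rw [e2]
        rw [hQm] at n1 n8
        have hLs : s m = L := rfl
        rw [hLs] at n8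
        linarith [hθℓ]
    · -- j < i'
      have n1 := norm_sub_le_norm_sub_add_norm_sub (Q i' + t • d) (Q (i' + 1)) (Q m)
      have n7 : ‖Q i' + t • d - Q (i' + 1)‖ = (1 - t) * ℓ i' := by
        rw [norm_sub_rev, hvp]
      have n8 : ‖Q (i' + 1) - Q m‖ ≤ s m - s (i' + 1) := by
        rw [norm_sub_rev]; exact hA (i' + 1) m (by omega)
      have n2 := norm_sub_le_norm_sub_add_norm_sub (Q i' + t • d) (Q i') b
      have n3 := norm_sub_le_norm_sub_add_norm_sub (Q i') (Q (j + 1)) b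
      have n5 : ‖Q i' - Q (j + 1)‖ ≤ s i' - s (j + 1) := hA (j + 1) i' (by omega)
      rw [hQm] at n1 n8
      have hLs : s m = L := rfl
      rw [hLs] at n8
      linarith
  -- conclude
  refine ⟨(2 : ℝ)⁻¹ • (Q 0 + b), fun p hp => ?_⟩
  have h := key p hp
  rw [mem_closedBall, dist_eq_norm, hlen]
  have hx : p - (2 : ℝ)⁻¹ • (Q 0 + b) = (2 : ℝ)⁻¹ • ((p - Q 0) + (p - b)) := by
    module
  rw [hx, norm_smul, Real.norm_eq_abs]
  have h2 : ‖p - Q 0 + (p - b)‖ ≤ ‖p - Q 0‖ + ‖p - b‖ := norm_add_le _ _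
  rw [abs_of_nonneg (by norm_num : (0:ℝ) ≤ (2:ℝ)⁻¹)]
  nlinarith

theorem stmt11 {n m : ℕ} [NeZero m] (q : Fin m → Euc n) :
    (∃ x : Euc n, polyImage q ⊆ Metric.closedBall x (polyLength q / 4)) ∧
      (∀ r : ℝ, 0 < r →
        (∀ x : Euc n, ¬ ((fun p => p + x) '' polyImage q ⊆ Metric.ball (0 : Euc n) r)) →
        4 * r ≤ polyLength q) := by
  obtain ⟨x, hx⟩ := exists_center q
  refine ⟨⟨x, hx⟩, ?_⟩
  intro r hr hno
  by_contra hlt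
  push_neg at hlt
  apply hno (-x)
  rintro p ⟨p', hp', rfl⟩
  have h := hx hp'
  rw [mem_closedBall] at h
  rw [mem_ball]
  have : dist (p' + -x) 0 = dist p' x := by
    simp [dist_eq_norm, sub_eq_add_neg]
  rw [this]
  linarith
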